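/- Let (V, g, J, ω) be a 4-dimensional almost Hermitian vector space with |ω|² = 2, and let α be a nonzero J-anti-invariant 2-form. Define Jα by (Jα)(X,Y) = −α(JX,Y). For real numbers f, r with 2f² + r²|α|² = 2, set ω̃ = fω + rJα and let J̃ be the almost complex structure determined by g and ω̃ (via g(J̃u, v) = ω̃(u,v)). Then α is J̃-anti-invariant. -/

import Mathlib

open scoped RealInnerProductSpace
open Module

noncomputable section

abbrev Form2 (V : Type*) [AddCommGroup V] [Module ℝ V] := AlternatingMap ℝ V ℝ (Fin 2)
abbrev Form4 (V : Type*) [AddCommGroup V] [Module ℝ V] := AlternatingMap ℝ V ℝ (Fin 4)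

def wedge {V : Type*} [AddCommGroup V] [Module ℝ V] (α β : Form2 V) : Form4 V :=
  ((TensorProduct.lid ℝ ℝ).toLinearMap.compAlternatingMap (α.domCoprod β)).domDomCongr finSumFinEquiv

def ip {V : Type*} [NormedAddCommGroup V] [InnerProductSpace ℝ V] [FiniteDimensional ℝ V]
    (α β : Form2 V) : ℝ :=
  (1/2) * ∑ i, ∑ j, α ![stdOrthonormalBasis ℝ V i, stdOrthonormalBasis ℝ V j] *
    β ![stdOrthonormalBasis ℝ V i, stdOrthonormalBasis ℝ V j]

def Jact {V : Type*} [AddCommGroup V] [Module ℝ V] (J : V →ₗ[ℝ] V) :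
    Form2 V →ₗ[ℝ] Form2 V where
  toFun α := α.compLinearMap J
  map_add' α β := by ext v; simp
  map_smul' c α := by ext v; simp

section AuxK
variable {V : Type*} [NormedAddCommGroup V] [InnerProductSpace ℝ V] [FiniteDimensional ℝ V]

private lemma upd0 {W : Type*} (x y v : W) :
    Function.update ![x, v] (0 : Fin 2) y = ![y, v] := by
  ext i; fin_cases i <;> simp

private lemma upd1 {W : Type*} (x y u : W) :
    Function.update ![u, x] (1 : Fin 2) y = ![u, y] := by
  ext i; fin_cases i <;> simp

private lemma form2_swap {W : Type*} [AddCommGroup W] [Module ℝ W] (β : Form2 W) (u v : W) :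
    β ![v, u] = - β ![u, v] := by
  have h := β.map_swap ![u, v] (i := 0) (j := 1) (by decide)
  have : ![u, v] ∘ Equiv.swap (0 : Fin 2) 1 = ![v, u] := by
    ext i; fin_cases i <;> simp
  rwa [this] at h

private def bform (α : Form2 V) : V →ₗ[ℝ] V →ₗ[ℝ] ℝ where
  toFun u :=
    { toFun := fun v => α ![u, v]
      map_add' := fun v v' => by
        have h := α.map_update_add ![u, v] 1 v v'
        simpa [upd1] using h
      map_smul' := fun c v => by
        have h := α.map_update_smul ![u, v] 1 c v
        simpa [upd1] using h }
  map_add' u u' := by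
    ext v
    have h := α.map_update_add ![u, v] 0 u u'
    simpa [upd0] using h
  map_smul' c u := by
    ext v
    have h := α.map_update_smul ![u, v] 0 c u
    simpa [upd0] using h

private def Kop (α : Form2 V) : V →ₗ[ℝ] V where
  toFun u := (InnerProductSpace.toDual ℝ V).symm
    (LinearMap.toContinuousLinearMap (bform α u))
  map_add' u u' := by
    simp only [map_add]
  map_smul' c u := by
    simp only [map_smul, LinearIsometryEquiv.map_smulₛₗ, RingHom.id_apply, starRingEnd_apply,
      star_trivial]

private lemma inner_Kop (α : Form2 V) (u v : V) : ⟪Kop α u, v⟫ = α ![u, v] := by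
  simp [Kop, InnerProductSpace.toDual_symm_apply, bform]

end AuxK

theorem alpha_is_antiinvariant_for_deformed_acs
    {V : Type*} [NormedAddCommGroup V] [InnerProductSpace ℝ V]
    [FiniteDimensional ℝ V] (h4 : finrank ℝ V = 4)
    (J : V →ₗ[ℝ] V) (hJ2 : ∀ v, J (J v) = -v)
    (hJorth : ∀ u v : V, ⟪J u, J v⟫ = ⟪u, v⟫)
    (ω : Form2 V) (hω : ∀ u v : V, ω ![u, v] = ⟪J u, v⟫)
    (hω2 : ip ω ω = 2)
    (α : Form2 V) (hα : ∀ u v : V, α ![J u, J v] = - α ![u, v]) (hαne : α ≠ 0)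
    (Jα : Form2 V) (hJα : ∀ u v : V, Jα ![u, v] = - α ![J u, v])
    (f r : ℝ) (hnorm : 2 * f ^ 2 + r ^ 2 * ip α α = 2)
    (Jt : V →ₗ[ℝ] V)
    (hJt : ∀ u v : V, ⟪Jt u, v⟫ = (f • ω + r • Jα) ![u, v]) :
    ∀ u v : V, α ![Jt u, Jt v] = - α ![u, v] := by
  set K := Kop α with hKdef
  have hKi : ∀ u v : V, ⟪K u, v⟫ = α ![u, v] := inner_Kop α
  -- J is skew
  have hJskew : ∀ u v : V, ⟪J u, v⟫ = -⟪u, J v⟫ := by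
    intro u v
    have : ⟪J u, J (J v)⟫ = ⟪u, J v⟫ := hJorth u (J v)
    rw [hJ2] at this
    simp only [inner_neg_right] at this
    linarith
  -- K is skew
  have hKskew : ∀ u v : V, ⟪K u, v⟫ = -⟪u, K v⟫ := by
    intro u v
    rw [hKi, real_inner_comm (K v) u, hKi v u, ← form2_swap]
  -- anti-invariance in inner form
  have hα' : ∀ u v : V, ⟪K (J u), J v⟫ = -⟪K u, v⟫ := by
    intro u v; rw [hKi, hKi, hα]
  -- K anti-commutes with J
  have hKJ : ∀ u : V, K (J u) = - J (K u) := by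
    intro u
    apply ext_inner_right ℝ
    intro v
    have hv : J (-(J v)) = v := by rw [map_neg, hJ2]; simp
    calc ⟪K (J u), v⟫ = ⟪K (J u), J (-(J v))⟫ := by rw [hv]
      _ = -⟪K u, -(J v)⟫ := hα' u _
      _ = ⟪K u, J v⟫ := by simp
      _ = -⟪J (K u), v⟫ := by linarith [hJskew (K u) v]
      _ = ⟪-J (K u), v⟫ := by simp
  -- universal orthogonality facts
  have hJxx : ∀ x : V, ⟪J x, x⟫ = 0 := by
    intro x
    have h1 := hJskew x x
    have h2 := real_inner_comm (J x) x
    linarith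
  have hKxx : ∀ x : V, ⟪K x, x⟫ = 0 := by
    intro x
    have h1 := hKskew x x
    have h2 := real_inner_comm (K x) x
    linarith
  have hKuJu : ∀ u : V, ⟪K u, J u⟫ = 0 := by
    intro u
    have h1 := hJskew (K u) u
    have h2 : ⟪K (J u), u⟫ = -⟪J (K u), u⟫ := by rw [hKJ u]; simp
    have h3 := hKskew (J u) u
    have h4 := real_inner_comm (J u) (K u)
    have h5 := real_inner_comm (J (K u)) u
    linarith
  -- key: K² u = -‖K u‖² u for unit u
  have res1 : ∀ u : V, ‖u‖ = 1 → K (K u) = -(‖K u‖ ^ 2 : ℝ) • u := by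
    intro u hu
    by_cases h0 : K u = 0
    · simp [h0]
    set n : ℝ := ‖K u‖ with hn
    have hnpos : 0 < n := norm_pos_iff.mpr h0
    have hnn : n ≠ 0 := ne_of_gt hnpos
    set e : Fin 4 → V := ![u, J u, n⁻¹ • K u, n⁻¹ • J (K u)] with he
    have huu : ⟪u, u⟫ = (1 : ℝ) := by
      rw [real_inner_self_eq_norm_sq, hu]; norm_num
    have hKuKu : ⟪K u, K u⟫ = n ^ 2 := by rw [real_inner_self_eq_norm_sq]
    have huJu : ⟪u, J u⟫ = 0 := by rw [real_inner_comm]; exact hJxx u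
    have huKu : ⟪u, K u⟫ = 0 := by rw [real_inner_comm]; exact hKxx u
    have huJKu : ⟪u, J (K u)⟫ = 0 := by
      have h1 := hJskew (K u) u
      have h2 := real_inner_comm u (J (K u))
      have h3 := hKuJu u
      have h4 := real_inner_comm (K u) (J u)
      linarith
    have hJuKu : ⟪J u, K u⟫ = 0 := by
      rw [real_inner_comm]; exact hKuJu u
    have hJuJKu : ⟪J u, J (K u)⟫ = 0 := by rw [hJorth]; exact huKu
    have hKuJKu : ⟪K u, J (K u)⟫ = 0 := by
      rw [real_inner_comm]; exact hJxx (K u)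
    have hon : Orthonormal ℝ e := by
      rw [orthonormal_iff_ite]
      intro i j
      fin_cases i <;> fin_cases j <;>
        simp [e, inner_smul_left, inner_smul_right, huu, hJorth, huJu, huKu, huJKu,
          hJuKu, hJuJKu, hKuJKu, hKuKu, real_inner_comm u (J u), real_inner_comm u (K u),
          real_inner_comm u (J (K u)), real_inner_comm (J u) (K u),
          real_inner_comm (J u) (J (K u)), real_inner_comm (K u) (J (K u)),
            -inner_self_eq_norm_sq_to_K] <;>
        (try field_simp) <;> ring
    have hcard : Fintype.card (Fin 4) = finrank ℝ V := by simp [h4]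
    have hli := hon.linearIndependent
    have hsp : ⊤ ≤ Submodule.span ℝ (Set.range e) := by
      have hb := (basisOfLinearIndependentOfCardEqFinrank hli hcard).span_eq
      rw [coe_basisOfLinearIndependentOfCardEqFinrank] at hb
      exact le_of_eq hb.symm
    set ob : OrthonormalBasis (Fin 4) ℝ V := OrthonormalBasis.mk hon hsp with hob
    have hobe : ∀ i, ob i = e i := fun i => by rw [hob, OrthonormalBasis.coe_mk]
    -- coefficients of K²u
    have c0 : ⟪u, K (K u)⟫ = -n ^ 2 := by
      have h1 := hKskew u (K u)
      have h2 := real_inner_comm (K u) u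
      linarith
    have c1 : ⟪J u, K (K u)⟫ = 0 := by
      have h1 := hKskew (J u) (K u)
      have h2 : ⟪K (J u), K u⟫ = -⟪J (K u), K u⟫ := by rw [hKJ u]; simp
      have h3 := real_inner_comm (J (K u)) (K u)
      have h4 := hJxx (K u)
      linarith
    have c2 : ⟪K u, K (K u)⟫ = 0 := by
      have h1 := hKskew (K u) (K u)
      have h2 := real_inner_comm (K u) (K (K u))
      have h3 := hKxx (K u)
      linarith
    have c3 : ⟪J (K u), K (K u)⟫ = 0 := by
      have h1 := hKskew (J (K u)) (K u)
      have h2 : ⟪K (J (K u)), K u⟫ = -⟪J (K (K u)), K u⟫ := by rw [hKJ (K u)]; simp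
      have h3 := hJskew (K (K u)) (K u)
      have h4 := real_inner_comm (K (K u)) (J (K u))
      have h5 := real_inner_comm (J (K (K u))) (K u)
      linarith
    have hrep := (ob.sum_repr (K (K u))).symm
    rw [Fin.sum_univ_four] at hrep
    simp only [OrthonormalBasis.repr_apply_apply, hobe] at hrep
    simp only [he, Matrix.cons_val_zero, Matrix.cons_val_one, Matrix.head_cons,
      Matrix.cons_val_two, Matrix.tail_cons, Matrix.cons_val_three,
      inner_smul_left, c0, c1, c2, c3] at hrep
    rw [hrep]
    simp
  have hunit : ∀ u : V, u ≠ 0 → ‖(‖u‖⁻¹ : ℝ) • u‖ = 1 := by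
    intro u h0
    have ht : ‖u‖ ≠ 0 := norm_ne_zero_iff.mpr h0
    rw [norm_smul, norm_inv, norm_norm, inv_mul_cancel₀ ht]
  have res2' : ∀ u : V, u ≠ 0 → K (K u) = -((‖u‖⁻¹ * ‖K u‖) ^ 2 : ℝ) • u := by
    intro u h0
    have ht : ‖u‖ ≠ 0 := norm_ne_zero_iff.mpr h0
    have h := res1 ((‖u‖⁻¹ : ℝ) • u) (hunit u h0)
    rw [map_smul, map_smul, norm_smul, norm_inv, norm_norm] at h
    rw [smul_comm] at h
    exact smul_right_injective V (inv_ne_zero ht) h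
  have res3 : ∀ u v : V, ‖u‖ = 1 → ‖v‖ = 1 → ‖K u‖ = ‖K v‖ := by
    intro u v hu hv
    by_cases hdep : ∃ a : ℝ, v = a • u
    · obtain ⟨a, rfl⟩ := hdep
      have ha : |a| = 1 := by
        rw [norm_smul, hu, mul_one, Real.norm_eq_abs] at hv; exact hv
      rw [map_smul, norm_smul, Real.norm_eq_abs, ha, one_mul]
    · have hw : u + v ≠ 0 := by
        intro h
        exact hdep ⟨-1, by rw [neg_one_smul, eq_neg_iff_add_eq_zero, add_comm]; exact h⟩
      have h := res2' (u + v) hw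
      rw [map_add, map_add, res1 u hu, res1 v hv] at h
      set q : ℝ := (‖u + v‖⁻¹ * ‖K u + K v‖) ^ 2 with hq
      have key : (q - ‖K u‖ ^ 2) • u + (q - ‖K v‖ ^ 2) • v = 0 := by
        rw [sub_smul, sub_smul]
        rw [smul_add] at h
        linear_combination (norm := module) h
      have hB : q - ‖K v‖ ^ 2 = 0 := by
        by_contra hB
        apply hdep
        refine ⟨-(q - ‖K u‖ ^ 2) / (q - ‖K v‖ ^ 2), ?_⟩
        have h2 : (q - ‖K v‖ ^ 2) • v = (-(q - ‖K u‖ ^ 2)) • u := by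
          rw [neg_smul, eq_neg_iff_add_eq_zero, add_comm]; exact key
        have h3 := congrArg (fun x : V => ((q - ‖K v‖ ^ 2)⁻¹ : ℝ) • x) h2
        simp only [smul_smul, inv_mul_cancel₀ hB, one_smul] at h3
        rw [div_eq_inv_mul]; exact h3
      have hA : q - ‖K u‖ ^ 2 = 0 := by
        rw [hB, zero_smul, add_zero, smul_eq_zero] at key
        rcases key with h | h
        · exact h
        · exact absurd h (by intro h'; rw [h', norm_zero] at hu; norm_num at hu)
      have := norm_nonneg (K u); have := norm_nonneg (K v)
      nlinarith [hA, hB]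
  -- the constant c
  have hfr : (0 : ℕ) < finrank ℝ V := by rw [h4]; norm_num
  set b := stdOrthonormalBasis ℝ V with hb
  set i0 : Fin (finrank ℝ V) := ⟨0, hfr⟩ with hi0
  set c : ℝ := ‖K (b i0)‖ ^ 2 with hc
  have hbunit : ∀ i, ‖b i‖ = 1 := b.orthonormal.1
  have hKnorm : ∀ u : V, ‖u‖ = 1 → ‖K u‖ ^ 2 = c := by
    intro u hu
    rw [res3 u (b i0) hu (hbunit i0)]
  have hipcalc : ip α α = 2 * c := by
    rw [ip]
    have hterm : ∀ i j, α ![b i, b j] * α ![b i, b j] = ⟪K (b i), b j⟫ * ⟪b j, K (b i)⟫ := by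
      intro i j
      rw [hKi, real_inner_comm (K (b i)) (b j), hKi]
    calc (1/2 : ℝ) * ∑ i, ∑ j, α ![b i, b j] * α ![b i, b j]
        = (1/2 : ℝ) * ∑ i, ∑ j, ⟪K (b i), b j⟫ * ⟪b j, K (b i)⟫ := by
          congr 1; refine Finset.sum_congr rfl fun i _ => ?_
          exact Finset.sum_congr rfl fun j _ => hterm i j
      _ = (1/2 : ℝ) * ∑ i : Fin (finrank ℝ V), ⟪K (b i), K (b i)⟫ := by
          congr 1; refine Finset.sum_congr rfl fun i _ => ?_
          exact b.sum_inner_mul_inner (K (b i)) (K (b i))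
      _ = (1/2 : ℝ) * ∑ i : Fin (finrank ℝ V), (c : ℝ) := by
          congr 1; refine Finset.sum_congr rfl fun i _ => ?_
          rw [real_inner_self_eq_norm_sq, hKnorm _ (hbunit i)]
      _ = 2 * c := by
          rw [Finset.sum_const, Finset.card_univ, Fintype.card_fin, h4]
          push_cast; ring
  have hf1 : f ^ 2 + r ^ 2 * c = 1 := by
    rw [hipcalc] at hnorm; linarith
  -- K² = -c
  have hK2 : ∀ u : V, K (K u) = -c • u := by
    intro u
    by_cases h0 : u = 0
    · simp [h0]
    have hcu : (‖u‖⁻¹ * ‖K u‖) ^ 2 = c := by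
      have h1 := hKnorm ((‖u‖⁻¹ : ℝ) • u) (hunit u h0)
      rw [map_smul, norm_smul, norm_inv, norm_norm] at h1
      exact h1
    rw [res2' u h0, hcu]
  -- Jt in terms of J and K
  have hJtu : ∀ u : V, Jt u = f • J u + r • J (K u) := by
    intro u
    apply ext_inner_right ℝ
    intro v
    rw [hJt u v]
    rw [AlternatingMap.add_apply, AlternatingMap.smul_apply, AlternatingMap.smul_apply]
    rw [inner_add_left, real_inner_smul_left, real_inner_smul_left]
    rw [hω u v, hJα u v, ← hKi, hKJ u]
    simp [smul_eq_mul]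
  -- final computation
  intro u v
  rw [← hKi, ← hKi, hJtu u, hJtu v]
  have hKJtu : K (f • J u + r • J (K u)) = (-f) • J (K u) + (r * c) • J u := by
    rw [map_add, map_smul, map_smul, hKJ u, hKJ (K u), hK2 u]
    rw [map_smul]
    module
  rw [hKJtu]
  simp only [inner_add_left, inner_add_right, real_inner_smul_left, real_inner_smul_right,
    hJorth]
  have hKK : ⟪K u, K v⟫ = c * ⟪u, v⟫ := by
    rw [hKskew u (K v), hK2 v, inner_smul_right]
    simp
  have hKuv : ⟪u, K v⟫ = -⟪K u, v⟫ := by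
    linarith [hKskew u v]
  rw [hKK, hKuv]
  linear_combination (-⟪K u, v⟫) * hf1
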